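/- arXiv:1603.00580 — 2 statements merged into one kernel-verified Lean document; each statement's English description precedes it below -/
import Mathlib

section
/- Suppose all points of S = R ∪ B ∪ P lie on a common circle with center c, and let G be a minimum red-blue-purple spanning graph of (R,B,P). Let p ∈ P be a purple point and let H be any closed half-plane whose boundary line passes through p and c (so H contains p and its antipodal point on the circle). Then p has at most one purple neighbor in G lying in H. Consequently, p has at most two purple neighbors in G in total. -/
open scoped Classical

noncomputable section

/-- The Euclidean plane. -/
abbrev Pt : Type := EuclideanSpace ℝ (Fin 2)

/-- The simple graph on the plane whose edge set is the finite set `E`. -/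
def graphOf (E : Finset (Sym2 Pt)) : SimpleGraph Pt where
  Adj x y := x ≠ y ∧ s(x, y) ∈ E
  symm := ⟨fun x y ⟨hne, he⟩ => ⟨hne.symm, by rwa [Sym2.eq_swap]⟩⟩
  loopless := ⟨fun x ⟨hne, _⟩ => hne rfl⟩

/-- Euclidean length of an edge. -/
def edgeLen (e : Sym2 Pt) : ℝ :=
  Sym2.lift ⟨fun x y => dist x y, fun _ _ => dist_comm _ _⟩ e

/-- Total Euclidean length of a finite edge set. -/
def weight (E : Finset (Sym2 Pt)) : ℝ := ∑ e ∈ E, edgeLen e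

/-- `E` is the edge set of a red-blue-purple spanning graph of `(R, B, P)`. -/
def IsRBP (R B P : Finset Pt) (E : Finset (Sym2 Pt)) : Prop :=
  (∀ e ∈ E, ¬ e.IsDiag) ∧
  (∀ e ∈ E, ∀ x ∈ e, x ∈ R ∪ B ∪ P) ∧
  ((graphOf E).induce (↑(R ∪ P) : Set Pt)).Connected ∧
  ((graphOf E).induce (↑(B ∪ P) : Set Pt)).Connected

/-- `E` is the edge set of a minimum red-blue-purple spanning graph of `(R, B, P)`. -/
def IsMinRBP (R B P : Finset Pt) (E : Finset (Sym2 Pt)) : Prop :=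
  IsRBP R B P E ∧ ∀ E', IsRBP R B P E' → weight E ≤ weight E'

open RealInnerProductSpace

lemma alg_key (r a b c d : ℝ) (hr : 0 < r) (h1 : a^2+b^2 = r^2) (h2 : c^2+d^2=r^2)
    (hb : b ≤ 0) (hd : d ≤ 0) (hac : a < c) (hcr : c < r) : r*a < a*c + b*d := by
  rcases le_or_gt a 0 with ha | ha
  · rcases eq_or_lt_of_le ha with ha0 | ha0
    · have hb' : b < 0 := by nlinarith
      have hd' : d < 0 := by nlinarith
      nlinarith [mul_pos (neg_pos.2 hb') (neg_pos.2 hd')]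
    · nlinarith [mul_nonneg (neg_nonneg.2 hb) (neg_nonneg.2 hd), mul_pos (neg_pos.2 ha0) (sub_pos.2 hcr)]
  · have hb' : b < 0 := by nlinarith
    have hd' : d < 0 := by nlinarith
    have h3 : b*d > 0 := mul_pos_of_neg_of_neg hb' hd'
    have e1 : (b*d)^2 - (a*(r-c))^2 = (r-c)*(r*(r^2 + r*c - 2*a^2)) := by nlinarith [sq_nonneg b, sq_nonneg d]
    have e2 : r^2 + r*c - 2*a^2 > 0 := by nlinarith [mul_pos (sub_pos.2 (lt_trans hac hcr)) (by linarith : (0:ℝ) < r + 2*a)]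
    have key : (b*d)^2 > (a*(r-c))^2 := by nlinarith [mul_pos (sub_pos.2 hcr) (mul_pos hr e2)]
    nlinarith [mul_pos ha (sub_pos.2 hcr)]

lemma orth3_eq_zero {E : Type*} [NormedAddCommGroup E] [InnerProductSpace ℝ E]
    [FiniteDimensional ℝ E] (hdim : Module.finrank ℝ E = 2) (w n v : E)
    (hw : w ≠ 0) (hn : n ≠ 0)
    (hwn : ⟪w, n⟫ = 0) (hvw : ⟪v, w⟫ = 0) (hvn : ⟪v, n⟫ = 0) : v = 0 := by
  by_contra hv
  have hnormv := norm_ne_zero_iff.2 hv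
  have hnormw := norm_ne_zero_iff.2 hw
  have hnormn := norm_ne_zero_iff.2 hn
  have horth : Orthonormal ℝ (![‖v‖⁻¹ • v, ‖w‖⁻¹ • w, ‖n‖⁻¹ • n] : Fin 3 → E) := by
    rw [orthonormal_iff_ite]
    intro i j
    fin_cases i <;> fin_cases j <;>
      simp_all [real_inner_smul_left, real_inner_smul_right, norm_smul,
        real_inner_self_eq_norm_mul_norm, real_inner_comm v w, real_inner_comm v n,
        real_inner_comm w n] <;>
      field_simp
  have := horth.linearIndependent.fintype_card_le_finrank
  simp [hdim] at this

lemma chord_key {E : Type*} [NormedAddCommGroup E] [InnerProductSpace ℝ E]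
    [FiniteDimensional ℝ E] (hdim : Module.finrank ℝ E = 2)
    (w n u u' : E) (r : ℝ) (hr : 0 < r)
    (hw : ‖w‖ = r) (hu : ‖u‖ = r) (hu' : ‖u'‖ = r) (hn0 : n ≠ 0)
    (hnw : ⟪n, w⟫ = 0) (hnu : ⟪n, u⟫ ≤ 0) (hnu' : ⟪n, u'⟫ ≤ 0)
    (hu'w : u' ≠ w) (huu' : u ≠ u')
    (hle : ⟪w, u⟫ ≤ ⟪w, u'⟫) : ⟪w, u⟫ < ⟪u, u'⟫ := by
  have hw0 : w ≠ 0 := by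
    intro h; rw [h, norm_zero] at hw; linarith
  have hnpos : (0:ℝ) < ‖n‖ := norm_pos_iff.2 hn0
  have hwn : ⟪w, n⟫ = 0 := by rw [real_inner_comm]; exact hnw
  have hww : ⟪w, w⟫ = r^2 := by rw [real_inner_self_eq_norm_mul_norm, hw]; ring
  have hnn : ⟪n, n⟫ = ‖n‖^2 := by rw [real_inner_self_eq_norm_mul_norm]; ring
  have decomp : ∀ x : E, x = (⟪w, x⟫ / r^2) • w + (⟪n, x⟫ / ‖n‖^2) • n := by
    intro x
    set v : E := x - (⟪w, x⟫ / r^2) • w - (⟪n, x⟫ / ‖n‖^2) • n with hvdef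
    have hvw : ⟪v, w⟫ = 0 := by
      rw [hvdef]
      simp only [inner_sub_left, real_inner_smul_left, hww, hnw]
      rw [real_inner_comm x w]
      field_simp
      ring
    have hvn : ⟪v, n⟫ = 0 := by
      rw [hvdef]
      simp only [inner_sub_left, real_inner_smul_left, hnn, hwn]
      rw [real_inner_comm x n]
      field_simp
      ring
    have hv0 : v = 0 := orth3_eq_zero hdim w n v hw0 hn0 hwn hvw hvn
    rw [hvdef, sub_sub, sub_eq_zero] at hv0
    exact hv0
  have key_exp : ∀ x y : E, ⟪x, y⟫ = (⟪w, x⟫ / r^2) * ⟪w, y⟫ + (⟪n, x⟫ / ‖n‖^2) * ⟪n, y⟫ := by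
    intro x y
    conv_lhs => rw [decomp x]
    rw [inner_add_left, real_inner_smul_left, real_inner_smul_left]
  have hrne : r ≠ 0 := ne_of_gt hr
  have hnne : ‖n‖ ≠ 0 := ne_of_gt hnpos
  set a : ℝ := ⟪w, u⟫ / r with hadef
  set b : ℝ := ⟪n, u⟫ / ‖n‖ with hbdef
  set c : ℝ := ⟪w, u'⟫ / r with hcdef
  set d : ℝ := ⟪n, u'⟫ / ‖n‖ with hddef
  have hwu : ⟪w, u⟫ = r * a := by rw [hadef]; field_simp
  have hwu' : ⟪w, u'⟫ = r * c := by rw [hcdef]; field_simp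
  have hnub : ⟪n, u⟫ = ‖n‖ * b := by rw [hbdef]; field_simp
  have hnu'd : ⟪n, u'⟫ = ‖n‖ * d := by rw [hddef]; field_simp
  have hab : a^2 + b^2 = r^2 := by
    have h1 : ⟪u, u⟫ = r^2 := by rw [real_inner_self_eq_norm_mul_norm, hu]; ring
    have h2 := key_exp u u
    rw [h1, hwu, hnub] at h2
    field_simp at h2
    have h3 : (a^2 + b^2 - r^2) * (r^2 * ‖n‖^2) = 0 := by rw [← h2, sub_self, zero_mul]
    rcases mul_eq_zero.mp h3 with h' | h'
    · linarith
    · exact absurd h' (by positivity)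
  have hcd : c^2 + d^2 = r^2 := by
    have h1 : ⟪u', u'⟫ = r^2 := by rw [real_inner_self_eq_norm_mul_norm, hu']; ring
    have h2 := key_exp u' u'
    rw [h1, hwu', hnu'd] at h2
    field_simp at h2
    have h3 : (c^2 + d^2 - r^2) * (r^2 * ‖n‖^2) = 0 := by rw [← h2, sub_self, zero_mul]
    rcases mul_eq_zero.mp h3 with h' | h'
    · linarith
    · exact absurd h' (by positivity)
  have huu'_exp : ⟪u, u'⟫ = a*c + b*d := by
    have h2 := key_exp u u'
    rw [hwu, hwu', hnub, hnu'd] at h2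
    rw [h2]
    field_simp
  have hb0 : b ≤ 0 := by
    rw [hbdef]; exact div_nonpos_of_nonpos_of_nonneg hnu hnpos.le
  have hd0 : d ≤ 0 := by
    rw [hddef]; exact div_nonpos_of_nonpos_of_nonneg hnu' hnpos.le
  have hu_eq : u = (r*a/r^2) • w + (‖n‖*b/‖n‖^2) • n := by
    conv_lhs => rw [decomp u]
    rw [hwu, hnub]
  have hu'_eq : u' = (r*c/r^2) • w + (‖n‖*d/‖n‖^2) • n := by
    conv_lhs => rw [decomp u']
    rw [hwu', hnu'd]
  have hac : a ≤ c := by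
    rw [hwu, hwu'] at hle
    exact (mul_le_mul_iff_right₀ hr).mp hle
  have hane : a ≠ c := by
    intro h
    apply huu'
    have hbd : b = d := by
      have hfac : (b - d) * (b + d) = 0 := by linear_combination hab - hcd - (a+c)*h
      rcases mul_eq_zero.mp hfac with h' | h'
      · linarith
      · have hb' : b = 0 := by linarith
        have hd' : d = 0 := by linarith
        rw [hb', hd']
    rw [hu_eq, hu'_eq, h, hbd]
  have haclt : a < c := lt_of_le_of_ne hac hane
  have hcr : c < r := by
    rcases lt_or_eq_of_le (show c ≤ r by nlinarith) with h | h
    · exact h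
    · exfalso
      apply hu'w
      have hd2 : d^2 = 0 := by linear_combination hcd - (c+r)*h
      have hd' : d = 0 := sq_eq_zero_iff.mp hd2
      rw [hu'_eq, h, hd']
      rw [mul_zero, zero_div, zero_smul, add_zero]
      rw [show r * r / r^2 = 1 by rw [pow_two]; field_simp, one_smul]
  rw [hwu, huu'_exp]
  exact alg_key r a b c d hr hab hcd hb0 hd0 haclt hcr

lemma geom_key (ctr p q q' : Pt) (r : ℝ) (hr : 0 < r)
    (hpc : dist p ctr = r) (hqc : dist q ctr = r) (hq'c : dist q' ctr = r)
    (f : Pt →ₗ[ℝ] ℝ) (hf0 : f ≠ 0) (hfp : f p = f ctr)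
    (hfq : f q ≤ f p) (hfq' : f q' ≤ f p)
    (hq'p : q' ≠ p) (hqq' : q ≠ q')
    (hle : dist p q' ≤ dist p q) : dist q q' < dist p q := by
  have hfc : Continuous f := f.continuous_of_finiteDimensional
  set fc : Pt →L[ℝ] ℝ := ⟨f, hfc⟩ with hfcdef
  set n : Pt := (InnerProductSpace.toDual ℝ Pt).symm fc with hndef
  have hrep : ∀ x : Pt, ⟪n, x⟫ = f x := fun x => InnerProductSpace.toDual_symm_apply
  have hn0 : n ≠ 0 := by
    intro h
    apply hf0
    ext x
    have := hrep x
    rw [h] at this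
    simpa using this.symm
  set w : Pt := p - ctr with hwdef
  set u : Pt := q - ctr with hudef
  set u' : Pt := q' - ctr with hu'def
  have hw : ‖w‖ = r := by rw [hwdef, ← dist_eq_norm]; exact hpc
  have hu : ‖u‖ = r := by rw [hudef, ← dist_eq_norm]; exact hqc
  have hu' : ‖u'‖ = r := by rw [hu'def, ← dist_eq_norm]; exact hq'c
  have hnw : ⟪n, w⟫ = 0 := by rw [hwdef, hrep (p - ctr), map_sub]; linarith
  have hnu : ⟪n, u⟫ ≤ 0 := by rw [hudef, hrep (q - ctr), map_sub]; simp; linarith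
  have hnu' : ⟪n, u'⟫ ≤ 0 := by rw [hu'def, hrep (q' - ctr), map_sub]; simp; linarith
  have hu'w : u' ≠ w := by
    rw [hu'def, hwdef]; intro h; exact hq'p (sub_left_injective h)
  have huu' : u ≠ u' := by
    rw [hudef, hu'def]; intro h; exact hqq' (sub_left_injective h)
  have hle' : ⟪w, u⟫ ≤ ⟪w, u'⟫ := by
    have h1 : (dist p q)^2 = 2*r^2 - 2*⟪w, u⟫ := by
      rw [dist_comm, dist_eq_norm, show q - p = u - w by rw [hudef, hwdef]; abel,
        norm_sub_sq_real, hu, hw, real_inner_comm u w]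
      ring
    have h2 : (dist p q')^2 = 2*r^2 - 2*⟪w, u'⟫ := by
      rw [dist_comm, dist_eq_norm, show q' - p = u' - w by rw [hu'def, hwdef]; abel,
        norm_sub_sq_real, hu', hw, real_inner_comm u' w]
      ring
    have := pow_le_pow_left₀ dist_nonneg hle 2
    rw [h1, h2] at this
    linarith
  have key := chord_key finrank_euclideanSpace_fin w n u u' r hr hw hu hu' hn0 hnw hnu hnu' hu'w huu' hle'
  have h1 : (dist p q)^2 = 2*r^2 - 2*⟪w, u⟫ := by
    rw [dist_comm, dist_eq_norm, show q - p = u - w by rw [hudef, hwdef]; abel,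
      norm_sub_sq_real, hu, hw, real_inner_comm u w]
    ring
  have h3 : (dist q q')^2 = 2*r^2 - 2*⟪u, u'⟫ := by
    rw [dist_eq_norm, show q - q' = u - u' by rw [hudef, hu'def]; abel,
      norm_sub_sq_real, hu, hu']
    ring
  have : (dist q q')^2 < (dist p q)^2 := by rw [h1, h3]; linarith
  exact lt_of_pow_lt_pow_left₀ 2 dist_nonneg this

lemma connected_transfer {V : Type*} {G G' : SimpleGraph V}
    (h : ∀ x y, G.Adj x y → G'.Reachable x y) (hG : G.Connected) : G'.Connected := by
  rw [SimpleGraph.connected_iff] at *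
  refine ⟨fun x y => ?_, hG.2⟩
  obtain ⟨w⟩ := hG.1 x y
  induction w with
  | nil => exact SimpleGraph.Reachable.refl _
  | cons ha _ ih => exact (h _ _ ha).trans ih

lemma edgeLen_mk (x y : Pt) : edgeLen s(x, y) = dist x y := rfl

lemma induce_connected_swap (E : Finset (Sym2 Pt)) (S : Set Pt) (p q q' : Pt)
    (hpS : p ∈ S) (hqS : q ∈ S) (hq'S : q' ∈ S)
    (hpq : p ≠ q) (hpq' : p ≠ q') (hqq' : q ≠ q')
    (he2 : s(p, q') ∈ E)
    (hconn : ((graphOf E).induce S).Connected) :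
    ((graphOf (insert s(q, q') (E.erase s(p, q)))).induce S).Connected := by
  set E' : Finset (Sym2 Pt) := insert s(q, q') (E.erase s(p, q)) with hE'
  apply connected_transfer (G := (graphOf E).induce S)
  · rintro ⟨x, hx⟩ ⟨y, hy⟩ hadj
    obtain ⟨hxy, hmem⟩ : x ≠ y ∧ s(x, y) ∈ E := SimpleGraph.induce_adj.mp hadj
    -- reachability of p and q in the new graph
    have hpq'E' : s(p, q') ∈ E' := by
      rw [hE']
      apply Finset.mem_insert_of_mem
      apply Finset.mem_erase.mpr
      refine ⟨?_, he2⟩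
      intro h
      rw [Sym2.eq_iff] at h
      rcases h with ⟨-, h⟩ | ⟨h1, -⟩
      · exact hqq' h.symm
      · exact hpq h1
    have hqq'E' : s(q, q') ∈ E' := Finset.mem_insert_self _ _
    have hreach_pq : ((graphOf E').induce S).Reachable ⟨p, hpS⟩ ⟨q, hqS⟩ := by
      have a1 : ((graphOf E').induce S).Adj ⟨p, hpS⟩ ⟨q', hq'S⟩ := by
        constructor
        · exact hpq'
        · exact hpq'E'
      have a2 : ((graphOf E').induce S).Adj ⟨q', hq'S⟩ ⟨q, hqS⟩ := by
        constructor
        · exact fun h => hqq' h.symm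
        · rw [Sym2.eq_swap]; exact hqq'E'
      exact a1.reachable.trans a2.reachable
    by_cases hcase : s(x, y) = s(p, q)
    · rw [Sym2.eq_iff] at hcase
      rcases hcase with ⟨h1, h2⟩ | ⟨h1, h2⟩
      · subst h1; subst h2
        exact hreach_pq
      · subst h1; subst h2
        exact hreach_pq.symm
    · apply SimpleGraph.Adj.reachable
      constructor
      · exact hxy
      · rw [hE']
        exact Finset.mem_insert_of_mem (Finset.mem_erase.mpr ⟨hcase, hmem⟩)
  · exact hconn

lemma swap_contradiction (R B P : Finset Pt) (E : Finset (Sym2 Pt))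
    (hE : IsMinRBP R B P E)
    (p q q' : Pt) (hp : p ∈ P) (hq : q ∈ P) (hq' : q' ∈ P)
    (hqp : q ≠ p) (hq'p : q' ≠ p) (hqq' : q ≠ q')
    (he1 : s(p, q) ∈ E) (he2 : s(p, q') ∈ E)
    (hlt : dist q q' < dist p q) : False := by
  set E' : Finset (Sym2 Pt) := insert s(q, q') (E.erase s(p, q)) with hE'
  have hrbp' : IsRBP R B P E' := by
    obtain ⟨⟨hdiag, hend, hc1, hc2⟩, -⟩ := hE
    refine ⟨?_, ?_, ?_, ?_⟩
    · intro e he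
      rw [hE', Finset.mem_insert] at he
      rcases he with rfl | he
      · simpa using hqq'
      · exact hdiag e (Finset.mem_of_mem_erase he)
    · intro e he x hx
      rw [hE', Finset.mem_insert] at he
      rcases he with rfl | he
      · rw [Sym2.mem_iff] at hx
        rcases hx with rfl | rfl
        · exact Finset.mem_union_right _ hq
        · exact Finset.mem_union_right _ hq'
      · exact hend e (Finset.mem_of_mem_erase he) x hx
    · exact induce_connected_swap E _ p q q'
        (by simp [hp]) (by simp [hq]) (by simp [hq'])
        (fun h => hqp h.symm) (fun h => hq'p h.symm) hqq' he2 hc1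
    · exact induce_connected_swap E _ p q q'
        (by simp [hp]) (by simp [hq]) (by simp [hq'])
        (fun h => hqp h.symm) (fun h => hq'p h.symm) hqq' he2 hc2
  have hwle := hE.2 E' hrbp'
  have hwerase : weight (E.erase s(p, q)) = weight E - edgeLen s(p, q) := by
    rw [weight, weight, Finset.sum_erase_eq_sub he1]
  have hwE' : weight E' ≤ edgeLen s(q, q') + weight (E.erase s(p, q)) := by
    rw [hE', weight]
    by_cases h : s(q, q') ∈ E.erase s(p, q)
    · rw [Finset.insert_eq_self.mpr h]
      have : (0:ℝ) ≤ edgeLen s(q, q') := by rw [edgeLen_mk]; exact dist_nonneg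
      rw [← weight]; linarith
    · rw [Finset.sum_insert h, ← weight]
  rw [hwerase, edgeLen_mk, edgeLen_mk] at hwE'
  linarith

/-- if all points lie on a circle with center `ctr`, `G` is a minimum
RBP spanning graph and `p` is purple, then for any closed half-plane `H` whose
boundary line passes through `p` and `ctr` (here `H = {q | f q ≤ f p}` for a
nonzero linear functional `f` with `f p = f ctr`), `p` has at most one purple
neighbor lying in `H`; consequently `p` has at most two purple neighbors. -/
theorem circle_minRBP_purple_neighbors (R B P : Finset Pt)
    (hRB : Disjoint R B) (hRP : Disjoint R P) (hBP : Disjoint B P)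
    (ctr : Pt) (r : ℝ) (hr : 0 < r)
    (hcirc : ∀ q ∈ R ∪ B ∪ P, dist q ctr = r)
    (E : Finset (Sym2 Pt)) (hE : IsMinRBP R B P E)
    (p : Pt) (hp : p ∈ P) :
    (∀ f : Pt →ₗ[ℝ] ℝ, f ≠ 0 → f p = f ctr →
      ({q : Pt | q ∈ P ∧ q ≠ p ∧ s(p, q) ∈ E ∧ f q ≤ f p}).ncard ≤ 1) ∧
    ({q : Pt | q ∈ P ∧ q ≠ p ∧ s(p, q) ∈ E}).ncard ≤ 2 := by
  have hpmem : p ∈ R ∪ B ∪ P := Finset.mem_union_right _ hp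
  have part1 : ∀ f : Pt →ₗ[ℝ] ℝ, f ≠ 0 → f p = f ctr →
      ({q : Pt | q ∈ P ∧ q ≠ p ∧ s(p, q) ∈ E ∧ f q ≤ f p}).ncard ≤ 1 := by
    intro f hf0 hfp
    have hfin : ({q : Pt | q ∈ P ∧ q ≠ p ∧ s(p, q) ∈ E ∧ f q ≤ f p}).Finite :=
      P.finite_toSet.subset (fun x hx => hx.1)
    by_contra hcon
    push_neg at hcon
    rw [Set.one_lt_ncard_iff hfin] at hcon
    obtain ⟨q, q', ⟨hqP, hqp, hqE, hqf⟩, ⟨hq'P, hq'p, hq'E, hq'f⟩, hne⟩ := hcon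
    have hqmem : q ∈ R ∪ B ∪ P := Finset.mem_union_right _ hqP
    have hq'mem : q' ∈ R ∪ B ∪ P := Finset.mem_union_right _ hq'P
    rcases le_total (dist p q') (dist p q) with hle | hle
    · exact swap_contradiction R B P E hE p q q' hp hqP hq'P hqp hq'p hne hqE hq'E
        (geom_key ctr p q q' r hr (hcirc p hpmem) (hcirc q hqmem) (hcirc q' hq'mem)
          f hf0 hfp hqf hq'f hq'p hne hle)
    · exact swap_contradiction R B P E hE p q' q hp hq'P hqP hq'p hqp hne.symm hq'E hqE
        (geom_key ctr p q' q r hr (hcirc p hpmem) (hcirc q' hq'mem) (hcirc q hqmem)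
          f hf0 hfp hq'f hqf hqp hne.symm hle)
  refine ⟨part1, ?_⟩
  -- construct a nonzero functional vanishing on p - ctr
  have hw0 : p - ctr ≠ 0 := by
    intro h
    have := hcirc p hpmem
    rw [dist_eq_norm, h, norm_zero] at this
    linarith
  haveI : Fact (Module.finrank ℝ Pt = 1 + 1) := ⟨by simp [finrank_euclideanSpace_fin]⟩
  obtain ⟨n, hnK, hn0⟩ : ∃ n ∈ (ℝ ∙ (p - ctr))ᗮ, n ≠ (0 : Pt) := by
    apply Submodule.exists_mem_ne_zero_of_ne_bot
    intro hbot
    have hfr : Module.finrank ℝ ((ℝ ∙ (p - ctr))ᗮ : Submodule ℝ Pt) = 1 :=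
      Submodule.finrank_orthogonal_span_singleton hw0
    rw [hbot] at hfr
    simp at hfr
  have hnw : ⟪p - ctr, n⟫ = 0 :=
    (Submodule.mem_orthogonal _ _).mp hnK (p - ctr) (Submodule.mem_span_singleton_self _)
  set f : Pt →ₗ[ℝ] ℝ := (innerₛₗ ℝ) n with hfdef
  have hfapp : ∀ x : Pt, f x = ⟪n, x⟫ := fun x => rfl
  have hf0 : f ≠ 0 := by
    intro h
    apply hn0
    have : f n = 0 := by rw [h]; rfl
    rw [hfapp] at this
    exact inner_self_eq_zero.mp this
  have hfp : f p = f ctr := by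
    have : f p - f ctr = 0 := by
      rw [← map_sub, hfapp, real_inner_comm]
      exact hnw
    linarith
  have h1 := part1 f hf0 hfp
  have h2 := part1 (-f) (by simpa using neg_ne_zero.mpr hf0) (by simp [hfp])
  set A := {q : Pt | q ∈ P ∧ q ≠ p ∧ s(p, q) ∈ E ∧ f q ≤ f p} with hA
  set Bs := {q : Pt | q ∈ P ∧ q ≠ p ∧ s(p, q) ∈ E ∧ (-f) q ≤ (-f) p} with hB
  have hsub : {q : Pt | q ∈ P ∧ q ≠ p ∧ s(p, q) ∈ E} ⊆ A ∪ Bs := by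
    rintro x ⟨h1', h2', h3'⟩
    rcases le_total (f x) (f p) with h | h
    · exact Or.inl ⟨h1', h2', h3', h⟩
    · exact Or.inr ⟨h1', h2', h3', by simpa using h⟩
  have hAfin : A.Finite := P.finite_toSet.subset (fun x hx => hx.1)
  have hBfin : Bs.Finite := P.finite_toSet.subset (fun x hx => hx.1)
  calc ({q : Pt | q ∈ P ∧ q ≠ p ∧ s(p, q) ∈ E}).ncard
      ≤ (A ∪ Bs).ncard := Set.ncard_le_ncard hsub (hAfin.union hBfin)
    _ ≤ A.ncard + Bs.ncard := Set.ncard_union_le A Bs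
    _ ≤ 1 + 1 := add_le_add h1 h2
    _ = 2 := rfl
end
end

section
/- Let T_R be a Euclidean minimum spanning tree of R ∪ P and T_B a Euclidean minimum spanning tree of B ∪ P, and assume R ∪ P and B ∪ P are nonempty. Then the graph G whose edge set is the union of the edge sets of T_R and T_B is a red-blue-purple spanning graph of (R,B,P), and its weight is at most twice the weight of a minimum red-blue-purple spanning graph of (R,B,P). -/
open scoped Classical

noncomputable section

/-- `T` is the edge set of a spanning tree on the point set `Q`. -/
def IsSpanningTreeOn (Q : Finset Pt) (T : Finset (Sym2 Pt)) : Prop :=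
  (∀ e ∈ T, ¬ e.IsDiag) ∧
  (∀ e ∈ T, ∀ x ∈ e, x ∈ Q) ∧
  ((graphOf T).induce (↑Q : Set Pt)).IsTree

/-- `T` is the edge set of a Euclidean minimum spanning tree of `Q`. -/
def IsEMST (Q : Finset Pt) (T : Finset (Sym2 Pt)) : Prop :=
  IsSpanningTreeOn Q T ∧ ∀ T', IsSpanningTreeOn Q T' → weight T ≤ weight T'

lemma exists_spanning_tree {α : Type*} [Finite α] (G : SimpleGraph α)
    (hG : G.Connected) : ∃ T ≤ G, T.IsTree := by
  classical
  generalize hn : G.edgeSet.ncard = n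
  induction n using Nat.strong_induction_on generalizing G with
  | _ n ih =>
    by_cases hac : G.IsAcyclic
    · exact ⟨G, le_refl _, hG, hac⟩
    · rw [SimpleGraph.isAcyclic_iff_forall_adj_isBridge] at hac
      push_neg at hac
      obtain ⟨v, w, hadj, hnb⟩ := hac
      rw [SimpleGraph.isBridge_iff] at hnb
      push_neg at hnb
      have hR : (G \ SimpleGraph.fromEdgeSet {s(v, w)}).Reachable v w := hnb
      set G' := G \ SimpleGraph.fromEdgeSet {s(v, w)} with hG'
      have hle : G' ≤ G := sdiff_le
      have hconn' : G'.Connected := by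
        rw [SimpleGraph.connected_iff] at hG ⊢
        refine ⟨fun a b => ?_, hG.2⟩
        obtain ⟨p⟩ := hG.1 a b
        induction p with
        | nil => exact SimpleGraph.Reachable.refl _
        | cons h q ihq =>
          rename_i x y z
          refine SimpleGraph.Reachable.trans ?_ ihq
          by_cases hcase : s(x, y) = s(v, w)
          · rw [Sym2.eq_iff] at hcase
            rcases hcase with ⟨rfl, rfl⟩ | ⟨rfl, rfl⟩
            · exact hR
            · exact hR.symm
          · refine SimpleGraph.Adj.reachable ?_
            rw [hG', SimpleGraph.sdiff_adj]
            refine ⟨h, fun hc => ?_⟩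
            rw [SimpleGraph.fromEdgeSet_adj] at hc
            exact hcase (Set.mem_singleton_iff.mp hc.1)
      have hsub : G'.edgeSet ⊂ G.edgeSet := by
        refine ⟨SimpleGraph.edgeSet_mono hle, fun hss => ?_⟩
        have h1 : s(v, w) ∈ G'.edgeSet := hss hadj
        rw [hG', SimpleGraph.edgeSet_sdiff, SimpleGraph.edgeSet_fromEdgeSet,
          SimpleGraph.edgeSet_sdiff_sdiff_isDiag] at h1
        exact h1.2 rfl
      have hlt : G'.edgeSet.ncard < n := by
        rw [← hn]
        exact Set.ncard_lt_ncard hsub (Set.toFinite _)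
      obtain ⟨T, hT1, hT2⟩ := ih _ hlt G' hconn' rfl
      exact ⟨T, le_trans hT1 hle, hT2⟩

lemma edgeLen_nonneg (e : Sym2 Pt) : 0 ≤ edgeLen e := by
  exact Sym2.ind (fun x y => by
    simp only [edgeLen, Sym2.lift_mk]; exact dist_nonneg) e

lemma weight_nonneg (E : Finset (Sym2 Pt)) : 0 ≤ weight E :=
  Finset.sum_nonneg fun e _ => edgeLen_nonneg e

lemma weight_mono {E F : Finset (Sym2 Pt)} (h : E ⊆ F) : weight E ≤ weight F :=
  Finset.sum_le_sum_of_subset_of_nonneg h fun e _ _ => edgeLen_nonneg e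

/-- From a connected induced graph extract a spanning tree as an edge subset. -/
lemma exists_tree_finset (Q : Finset Pt) (E : Finset (Sym2 Pt))
    (hconn : ((graphOf E).induce (↑Q : Set Pt)).Connected) :
    ∃ T' ⊆ E, IsSpanningTreeOn Q T' := by
  classical
  have hfin : Finite (↥(↑Q : Set Pt)) := Q.finite_toSet.to_subtype
  obtain ⟨T, hle, hT⟩ := exists_spanning_tree _ hconn
  set f : ↥(↑Q : Set Pt) → Pt := Subtype.val with hf
  have hfinj : Function.Injective f := Subtype.val_injective
  set T' : Finset (Sym2 Pt) := (Set.toFinite T.edgeSet).toFinset.image (Sym2.map f) with hT'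
  have hmem : ∀ e, e ∈ T' ↔ ∃ g ∈ T.edgeSet, Sym2.map f g = e := by
    intro e
    simp only [hT', Finset.mem_image, Set.Finite.mem_toFinset]
  have key : ∀ a b, s(f a, f b) ∈ T' ↔ T.Adj a b := by
    intro a b
    rw [hmem]
    constructor
    · rintro ⟨g, hg, heq⟩
      have : g = s(a, b) := by
        apply Sym2.map.injective hfinj
        rw [heq, Sym2.map_pair_eq]
      rwa [this, SimpleGraph.mem_edgeSet] at hg
    · intro h
      exact ⟨s(a, b), h, Sym2.map_pair_eq ..⟩
  refine ⟨T', ?_, ?_, ?_, ?_⟩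
  · -- T' ⊆ E
    intro e he
    rw [hmem] at he
    obtain ⟨g, hg, rfl⟩ := he
    induction g using Sym2.ind with
    | _ c d =>
      rw [SimpleGraph.mem_edgeSet] at hg
      have h2 : ((graphOf E).induce (↑Q : Set Pt)).Adj c d := hle hg
      have h3 : (graphOf E).Adj (f c) (f d) := h2
      rw [Sym2.map_pair_eq]
      exact h3.2
  · -- no diagonal edges
    intro e he
    rw [hmem] at he
    obtain ⟨g, hg, rfl⟩ := he
    rw [Sym2.isDiag_map hfinj]
    exact SimpleGraph.not_isDiag_of_mem_edgeSet _ hg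
  · -- endpoints in Q
    intro e he x hx
    rw [hmem] at he
    obtain ⟨g, hg, rfl⟩ := he
    rw [Sym2.mem_map] at hx
    obtain ⟨c, _, rfl⟩ := hx
    exact c.2
  · -- tree
    have hEq : (graphOf T').induce (↑Q : Set Pt) = T := by
      ext a b
      show (f a ≠ f b ∧ s(f a, f b) ∈ T') ↔ T.Adj a b
      constructor
      · rintro ⟨_, h⟩
        exact (key a b).mp h
      · intro h
        exact ⟨fun hc => h.ne (hfinj hc), (key a b).mpr h⟩
    rwa [hEq]

/-- the union of a Euclidean MST of `R ∪ P` and a Euclidean MST of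
`B ∪ P` is an RBP spanning graph of `(R, B, P)` whose weight is at most twice the
weight of a minimum RBP spanning graph. -/
theorem union_of_MSTs_is_two_approximation (R B P : Finset Pt)
    (hRB : Disjoint R B) (hRP : Disjoint R P) (hBP : Disjoint B P)
    (hRPne : (R ∪ P).Nonempty) (hBPne : (B ∪ P).Nonempty)
    (TR TB : Finset (Sym2 Pt))
    (hTR : IsEMST (R ∪ P) TR) (hTB : IsEMST (B ∪ P) TB) :
    IsRBP R B P (TR ∪ TB) ∧
    ∀ E : Finset (Sym2 Pt), IsMinRBP R B P E →
      weight (TR ∪ TB) ≤ 2 * weight E := by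
  classical
  obtain ⟨⟨hTRdiag, hTRmem, hTRtree⟩, hTRmin⟩ := hTR
  obtain ⟨⟨hTBdiag, hTBmem, hTBtree⟩, hTBmin⟩ := hTB
  have hmonoR : graphOf TR ≤ graphOf (TR ∪ TB) := by
    intro x y ⟨hne, he⟩
    exact ⟨hne, Finset.mem_union_left _ he⟩
  have hmonoB : graphOf TB ≤ graphOf (TR ∪ TB) := by
    intro x y ⟨hne, he⟩
    exact ⟨hne, Finset.mem_union_right _ he⟩
  have hindR : (graphOf TR).induce (↑(R ∪ P) : Set Pt) ≤
      (graphOf (TR ∪ TB)).induce (↑(R ∪ P) : Set Pt) := fun a b hab => hmonoR hab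
  have hindB : (graphOf TB).induce (↑(B ∪ P) : Set Pt) ≤
      (graphOf (TR ∪ TB)).induce (↑(B ∪ P) : Set Pt) := fun a b hab => hmonoB hab
  refine ⟨⟨?_, ?_, ?_, ?_⟩, ?_⟩
  · intro e he
    rcases Finset.mem_union.mp he with h | h
    · exact hTRdiag e h
    · exact hTBdiag e h
  · intro e he x hx
    rcases Finset.mem_union.mp he with h | h
    · have := hTRmem e h x hx
      rw [Finset.mem_union] at this ⊢
      rw [Finset.mem_union]
      rcases this with h' | h'
      · exact Or.inl (Or.inl h')
      · exact Or.inr h'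
    · have := hTBmem e h x hx
      rw [Finset.mem_union] at this ⊢
      rw [Finset.mem_union]
      rcases this with h' | h'
      · exact Or.inl (Or.inr h')
      · exact Or.inr h'
  · exact hTRtree.isConnected.mono hindR
  · exact hTBtree.isConnected.mono hindB
  · intro E hE
    obtain ⟨⟨hEdiag, hEmem, hERconn, hEBconn⟩, _⟩ := hE
    obtain ⟨TR', hTR'sub, hTR'⟩ := exists_tree_finset (R ∪ P) E hERconn
    obtain ⟨TB', hTB'sub, hTB'⟩ := exists_tree_finset (B ∪ P) E hEBconn
    have h1 : weight TR ≤ weight E := (hTRmin TR' hTR').trans (weight_mono hTR'sub)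
    have h2 : weight TB ≤ weight E := (hTBmin TB' hTB').trans (weight_mono hTB'sub)
    have h3 : weight (TR ∪ TB) ≤ weight TR + weight TB := by
      have := Finset.sum_union_inter (s₁ := TR) (s₂ := TB) (f := edgeLen)
      have h4 : 0 ≤ weight (TR ∩ TB) := weight_nonneg _
      unfold weight at *
      linarith
    linarith
end
end
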